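/- For all x with |x| ≤ 1, (arcsin x)² = ∑_{k=0}^∞ x^{2k+2} · 4^k · (k!)² / ((k+1) · (2k+1)!). -/

import Mathlib

open Nat Real Filter

noncomputable def Bc (k : ℕ) : ℝ := 4 ^ k * (k ! : ℝ) ^ 2 / (2 * k + 1)!

lemma Bc_pos (k : ℕ) : 0 < Bc k := by
  unfold Bc
  positivity

lemma Bc_rec (k : ℕ) : (2 * k + 3) * Bc (k + 1) = (2 * k + 2) * Bc k := by
  unfold Bc
  have h1 : (2 * (k + 1) + 1)! = (2 * k + 3) * ((2 * k + 2) * (2 * k + 1)!) := by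
    have : 2 * (k + 1) + 1 = (2 * k + 2) + 1 := by ring
    rw [this, factorial_succ]
    rw [show 2 * k + 2 = (2 * k + 1) + 1 from rfl, factorial_succ]
  have h2 : ((k + 1)! : ℝ) = (k + 1) * k ! := by
    rw [factorial_succ]; push_cast; ring
  have hf : ((2 * k + 1)! : ℝ) ≠ 0 := by positivity
  rw [h1, h2]
  push_cast
  field_simp
  ring

lemma Bc_sq_le (k : ℕ) : (k + 1 : ℝ) * Bc k ^ 2 ≤ 1 := by
  induction k with
  | zero => simp [Bc]
  | succ n ih =>
    have hrec : Bc (n + 1) = (2 * n + 2) / (2 * n + 3) * Bc n := by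
      field_simp
      linarith [Bc_rec n]
    rw [hrec]
    have h1 : ((n : ℝ) + 1 + 1) * ((2 * n + 2) / (2 * n + 3) * Bc n) ^ 2
        = ((n + 2) * (2 * n + 2) ^ 2 / ((2 * n + 3) ^ 2 * (n + 1))) * ((n + 1) * Bc n ^ 2) := by
      field_simp
      ring
    push_cast
    rw [h1]
    have h2 : ((n : ℝ) + 2) * (2 * n + 2) ^ 2 / ((2 * n + 3) ^ 2 * (n + 1)) ≤ 1 := by
      rw [div_le_one (by positivity)]
      nlinarith [sq_nonneg ((n : ℝ))]
    have h3 : (0 : ℝ) ≤ (n + 1) * Bc n ^ 2 := by positivity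
    calc ((n : ℝ) + 2) * (2 * n + 2) ^ 2 / ((2 * n + 3) ^ 2 * (n + 1)) * ((n + 1) * Bc n ^ 2)
        ≤ 1 * 1 := by
          apply mul_le_mul h2 ih h3 (by norm_num)
      _ = 1 := by norm_num

lemma Bc_tendsto : Tendsto Bc atTop (nhds 0) := by
  have h1 : ∀ k : ℕ, Bc k ≤ 1 / Real.sqrt (k + 1) := by
    intro k
    have h := Bc_sq_le k
    have hpos : (0 : ℝ) < Real.sqrt (k + 1) := Real.sqrt_pos.mpr (by positivity)
    rw [le_div_iff₀ hpos]
    nlinarith [Bc_pos k, Real.sq_sqrt (show (0:ℝ) ≤ (k:ℝ) + 1 by positivity),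
      Real.sqrt_nonneg ((k:ℝ) + 1), sq_nonneg (Bc k * Real.sqrt (k+1) - 1)]
  apply squeeze_zero (fun k => (Bc_pos k).le) h1
  have h2 : Tendsto (fun k : ℕ => ((k : ℝ) + 1)⁻¹) atTop (nhds 0) :=
    tendsto_one_div_add_atTop_nhds_zero_nat.congr (by intro n; rw [one_div])
  have h3 := (Real.continuous_sqrt.tendsto' 0 0 (by simp)).comp h2
  refine h3.congr fun n => ?_
  simp [Function.comp, Real.sqrt_inv, one_div]

lemma sin_pow_intable (m : ℕ) (a b : ℝ) :
    IntervalIntegrable (fun t => Real.sin t ^ m) MeasureTheory.volume a b :=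
  (Real.continuous_sin.pow m).intervalIntegrable a b

/-- Key identity (‡). -/
lemma theta_eq (n : ℕ) (θ : ℝ) :
    θ = (∑ k ∈ Finset.range (n + 1), Bc k * Real.sin θ ^ (2 * k + 1) * Real.cos θ)
        + (2 * n + 2) * Bc n * ∫ t in (0:ℝ)..θ, Real.sin t ^ (2 * n + 2) := by
  induction n with
  | zero =>
    have h2 : 2 * 0 + 2 = 2 := rfl
    rw [Finset.sum_range_one, h2, integral_sin_sq]
    have hB : Bc 0 = 1 := by norm_num [Bc, Nat.factorial]
    rw [hB]
    push_cast
    simp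
    ring
  | succ n ih =>
    rw [Finset.sum_range_succ]
    set I1 := ∫ t in (0:ℝ)..θ, Real.sin t ^ (2 * n + 2) with hI1
    set I2 := ∫ t in (0:ℝ)..θ, Real.sin t ^ (2 * n + 2 + 2) with hI2
    have hred := @integral_sin_pow 0 θ (2 * n + 2)
    rw [← hI1, ← hI2] at hred
    have hc : ((2 * n + 2 : ℕ) : ℝ) + 2 ≠ 0 := by positivity
    have hred' : ((2 * n : ℝ) + 4) * I2 = - Real.sin θ ^ (2 * n + 3) * Real.cos θ
        + ((2 * n : ℝ) + 3) * I1 := by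
      rw [hred]
      simp only [Real.sin_zero, Real.cos_zero]
      push_cast
      field_simp
      ring
    have key : (2 * (n:ℝ) + 2) * Bc n * I1
        = Bc (n + 1) * Real.sin θ ^ (2 * (n + 1) + 1) * Real.cos θ
          + (2 * ((n:ℝ) + 1) + 2) * Bc (n + 1) * I2 := by
      have e2 : 2 * (n + 1) + 1 = 2 * n + 3 := by ring
      rw [e2]
      linear_combination -Bc (n + 1) * hred' - I1 * (Bc_rec n)
    have he : 2 * (n + 1) + 2 = 2 * n + 2 + 2 := by ring
    rw [he, ← hI2]
    push_cast
    linarith [ih, key]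

noncomputable def SF (n : ℕ) (ψ : ℝ) : ℝ := ∫ t in (0:ℝ)..ψ, Real.sin t ^ (2 * n + 2)

lemma SF_continuous (n : ℕ) : Continuous (SF n) :=
  intervalIntegral.continuous_primitive (fun a b => sin_pow_intable _ a b) 0

lemma sin_pow_mul_cos_integral (m : ℕ) (θ : ℝ) :
    ∫ t in (0:ℝ)..θ, Real.sin t ^ (2 * m + 1) * Real.cos t
      = Real.sin θ ^ (2 * m + 2) / (2 * m + 2) := by
  have h : ∀ ψ ∈ Set.uIcc (0:ℝ) θ,
      HasDerivAt (fun u => Real.sin u ^ (2 * m + 2) / (2 * m + 2))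
        (Real.sin ψ ^ (2 * m + 1) * Real.cos ψ) ψ := by
    intro ψ _
    have h1 := ((Real.hasDerivAt_sin ψ).pow (2 * m + 2)).div_const ((2 * m + 2 : ℕ) : ℝ)
    have e : ((2 * m + 2 : ℕ) : ℝ) * Real.sin ψ ^ (2 * m + 2 - 1) * Real.cos ψ
        / ((2 * m + 2 : ℕ) : ℝ) = Real.sin ψ ^ (2 * m + 1) * Real.cos ψ := by
      have : 2 * m + 2 - 1 = 2 * m + 1 := rfl
      rw [this]
      have hc : ((2 * m + 2 : ℕ) : ℝ) ≠ 0 := by positivity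
      field_simp
    rw [e] at h1
    refine HasDerivAt.congr_of_eventuallyEq h1 (Filter.Eventually.of_forall fun u => ?_)
    push_cast [Pi.pow_apply]
    ring
  rw [intervalIntegral.integral_eq_sub_of_hasDerivAt h
      (((Real.continuous_sin.pow _).mul Real.continuous_cos).intervalIntegrable _ _)]
  simp

/-- Integrated identity (†). -/
lemma theta_sq_eq (n : ℕ) (θ : ℝ) :
    θ ^ 2 = (∑ k ∈ Finset.range (n + 1), Bc k / (k + 1) * Real.sin θ ^ (2 * k + 2))
        + (4 * n + 4) * Bc n * ∫ ψ in (0:ℝ)..θ, SF n ψ := by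
  have hid : θ ^ 2 = 2 * ∫ ψ in (0:ℝ)..θ, ψ := by
    rw [integral_id]; ring
  have hcong : (∫ ψ in (0:ℝ)..θ, ψ)
      = ∫ ψ in (0:ℝ)..θ, ((∑ k ∈ Finset.range (n + 1),
          Bc k * Real.sin ψ ^ (2 * k + 1) * Real.cos ψ)
        + (2 * n + 2) * Bc n * SF n ψ) := by
    apply intervalIntegral.integral_congr
    intro ψ _
    exact theta_eq n ψ
  have hint1 : ∀ k ∈ Finset.range (n + 1), IntervalIntegrable
      (fun ψ => Bc k * Real.sin ψ ^ (2 * k + 1) * Real.cos ψ) MeasureTheory.volume 0 θ := by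
    intro k _
    exact (((continuous_const.mul (Real.continuous_sin.pow _)).mul
      Real.continuous_cos)).intervalIntegrable _ _
  have hsplit : (∫ ψ in (0:ℝ)..θ, ((∑ k ∈ Finset.range (n + 1),
          Bc k * Real.sin ψ ^ (2 * k + 1) * Real.cos ψ)
        + (2 * n + 2) * Bc n * SF n ψ))
      = (∑ k ∈ Finset.range (n + 1),
          ∫ ψ in (0:ℝ)..θ, Bc k * Real.sin ψ ^ (2 * k + 1) * Real.cos ψ)
        + (2 * n + 2) * Bc n * ∫ ψ in (0:ℝ)..θ, SF n ψ := by
    have hf : Continuous (fun ψ : ℝ => ∑ k ∈ Finset.range (n + 1),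
        Bc k * Real.sin ψ ^ (2 * k + 1) * Real.cos ψ) := by
      apply continuous_finset_sum
      intro k _
      fun_prop
    rw [intervalIntegral.integral_add (hf.intervalIntegrable _ _)
      ((show Continuous fun ψ => (2 * (n:ℝ) + 2) * Bc n * SF n ψ from continuous_const.mul (SF_continuous n)).intervalIntegrable _ _),
      intervalIntegral.integral_finset_sum hint1,
      intervalIntegral.integral_const_mul]
  have hterm : ∀ k ∈ Finset.range (n + 1),
      (∫ ψ in (0:ℝ)..θ, Bc k * Real.sin ψ ^ (2 * k + 1) * Real.cos ψ)
        = Bc k / (2 * k + 2) * Real.sin θ ^ (2 * k + 2) := by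
    intro k _
    have : (fun ψ => Bc k * Real.sin ψ ^ (2 * k + 1) * Real.cos ψ)
        = fun ψ => Bc k * (Real.sin ψ ^ (2 * k + 1) * Real.cos ψ) := by
      funext ψ; ring
    rw [this, intervalIntegral.integral_const_mul, sin_pow_mul_cos_integral]
    field_simp
  rw [hid, hcong, hsplit, Finset.sum_congr rfl hterm, mul_add]
  rw [Finset.mul_sum]
  congr 1
  · apply Finset.sum_congr rfl
    intro k _
    field_simp
  · push_cast
    ring

lemma cos_quad_bound {u : ℝ} (h0 : 0 ≤ u) (h1 : u ≤ π / 2) :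
    Real.cos u ≤ Real.exp (-(2 / π ^ 2 * u ^ 2)) := by
  have hπ : (0 : ℝ) < π := Real.pi_pos
  have hs : u / π ≤ Real.sin (u / 2) := by
    have := Real.mul_le_sin (x := u / 2) (by linarith) (by linarith)
    calc u / π = 2 / π * (u / 2) := by field_simp
      _ ≤ Real.sin (u / 2) := this
  have hs0 : 0 ≤ u / π := by positivity
  have hcos : Real.cos u = 1 - 2 * Real.sin (u / 2) ^ 2 := by
    have h2 : Real.cos (2 * (u / 2)) = Real.cos (u / 2) ^ 2 - Real.sin (u / 2) ^ 2 :=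
      Real.cos_two_mul' _
    have h3 : (2 : ℝ) * (u / 2) = u := by ring
    rw [h3] at h2
    have h4 := Real.sin_sq_add_cos_sq (u / 2)
    linarith
  have key : Real.cos u ≤ 1 - 2 / π ^ 2 * u ^ 2 := by
    rw [hcos]
    have : (u / π) ^ 2 ≤ Real.sin (u / 2) ^ 2 := by
      apply sq_le_sq' (by linarith) hs
    have h3 : 2 / π ^ 2 * u ^ 2 = 2 * ((u / π) ^ 2) := by ring
    rw [h3]
    linarith [this]
  calc Real.cos u ≤ 1 - 2 / π ^ 2 * u ^ 2 := key
    _ ≤ Real.exp (-(2 / π ^ 2 * u ^ 2)) := Real.one_sub_le_exp_neg _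

lemma SF_hasDerivAt (n : ℕ) (ψ : ℝ) :
    HasDerivAt (SF n) (Real.sin ψ ^ (2 * n + 2)) ψ := by
  apply intervalIntegral.integral_hasDerivAt_right (sin_pow_intable _ 0 ψ)
  · exact (Real.continuous_sin.pow _).stronglyMeasurable.stronglyMeasurableAtFilter
  · exact (Real.continuous_sin.pow _).continuousAt

lemma SF_nonneg (n : ℕ) {ψ : ℝ} (h : 0 ≤ ψ) : 0 ≤ SF n ψ := by
  apply intervalIntegral.integral_nonneg h
  intro t _
  have he : Even (2 * n + 2) := ⟨n + 1, by ring⟩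
  exact he.pow_nonneg _

/-- integration by parts step -/
lemma SF_integral_eq (n : ℕ) :
    (∫ ψ in (0:ℝ)..(π/2), SF n ψ)
      = ∫ ψ in (0:ℝ)..(π/2), (π / 2 - ψ) * Real.sin ψ ^ (2 * n + 2) := by
  have hg : ∀ ψ ∈ Set.uIcc (0:ℝ) (π/2),
      HasDerivAt (fun ψ => (π / 2 - ψ) * SF n ψ)
        (-SF n ψ + (π / 2 - ψ) * Real.sin ψ ^ (2 * n + 2)) ψ := by
    intro ψ _
    have h1 : HasDerivAt (fun ψ : ℝ => π / 2 - ψ) (-1) ψ := by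
      simpa using (hasDerivAt_id ψ).const_sub (π / 2)
    have := h1.mul (SF_hasDerivAt n ψ)
    refine this.congr_deriv ?_
    ring
  have hcont : Continuous fun ψ => -SF n ψ + (π / 2 - ψ) * Real.sin ψ ^ (2 * n + 2) := by
    apply (SF_continuous n).neg.add
    exact (continuous_const.sub continuous_id).mul (Real.continuous_sin.pow _)
  have h0 := intervalIntegral.integral_eq_sub_of_hasDerivAt hg (hcont.intervalIntegrable _ _)
  have hSF0 : SF n 0 = 0 := intervalIntegral.integral_same
  have hw : Continuous fun ψ : ℝ => (π / 2 - ψ) * Real.sin ψ ^ (2 * n + 2) := by fun_prop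
  rw [intervalIntegral.integral_add ((show Continuous fun ψ => -SF n ψ from (SF_continuous n).neg).intervalIntegrable _ _)
    (hw.intervalIntegrable _ _), intervalIntegral.integral_neg] at h0
  simp [hSF0] at h0
  linarith [h0]

lemma gauss_integral_le (a : ℝ) (ha : 0 < a) :
    (∫ ψ in (0:ℝ)..(π/2), (π / 2 - ψ) * Real.exp (-(a * (π / 2 - ψ) ^ 2)))
      ≤ 1 / (2 * a) := by
  have hH : ∀ ψ ∈ Set.uIcc (0:ℝ) (π/2),
      HasDerivAt (fun ψ => Real.exp (-(a * (π / 2 - ψ) ^ 2)) / (2 * a))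
        ((π / 2 - ψ) * Real.exp (-(a * (π / 2 - ψ) ^ 2))) ψ := by
    intro ψ _
    have h1 : HasDerivAt (fun ψ : ℝ => -(a * (π / 2 - ψ) ^ 2))
        (2 * a * (π / 2 - ψ)) ψ := by
      have hb : HasDerivAt (fun ψ : ℝ => π / 2 - ψ) (-1) ψ := by
        simpa using (hasDerivAt_id ψ).const_sub (π / 2)
      have := ((hb.pow 2).const_mul a).neg
      refine this.congr_deriv ?_
      push_cast
      ring
    have h2 := (h1.exp).div_const (2 * a)
    refine h2.congr_deriv ?_
    field_simp
  have hcont : Continuous fun ψ : ℝ => (π / 2 - ψ) * Real.exp (-(a * (π / 2 - ψ) ^ 2)) := by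
    fun_prop
  have h0 := intervalIntegral.integral_eq_sub_of_hasDerivAt hH (hcont.intervalIntegrable _ _)
  rw [h0]
  simp only [sub_self]
  have h1 : Real.exp (-(a * (π / 2 - 0) ^ 2)) ≥ 0 := (Real.exp_pos _).le
  have h2 : Real.exp (-(a * (0:ℝ) ^ 2)) = 1 := by norm_num
  rw [h2]
  have h3 : 0 ≤ Real.exp (-(a * (π / 2 - 0) ^ 2)) / (2 * a) := by positivity
  linarith

lemma rem_bound (n : ℕ) {θ : ℝ} (h0 : 0 ≤ θ) (h1 : θ ≤ π / 2) :
    (∫ ψ in (0:ℝ)..θ, SF n ψ) ≤ π ^ 2 / (8 * (n + 1)) := by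
  have hπ : (0:ℝ) < π := Real.pi_pos
  have step1 : (∫ ψ in (0:ℝ)..θ, SF n ψ) ≤ ∫ ψ in (0:ℝ)..(π/2), SF n ψ := by
    apply intervalIntegral.integral_mono_interval le_rfl h0 h1 ?_
      ((SF_continuous n).intervalIntegrable _ _)
    filter_upwards [MeasureTheory.ae_restrict_mem measurableSet_Ioc] with ψ hψ
    exact SF_nonneg n hψ.1.le
  set a : ℝ := (2 * (n:ℝ) + 2) * (2 / π ^ 2) with ha
  have ha0 : 0 < a := by positivity
  have step2 : (∫ ψ in (0:ℝ)..(π/2), SF n ψ)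
      ≤ ∫ ψ in (0:ℝ)..(π/2), (π / 2 - ψ) * Real.exp (-(a * (π / 2 - ψ) ^ 2)) := by
    rw [SF_integral_eq]
    apply intervalIntegral.integral_mono_on (by linarith)
      ((by fun_prop : Continuous fun ψ : ℝ => (π / 2 - ψ) * Real.sin ψ ^ (2 * n + 2)).intervalIntegrable _ _)
      ((by fun_prop : Continuous fun ψ : ℝ => (π / 2 - ψ) * Real.exp (-(a * (π / 2 - ψ) ^ 2))).intervalIntegrable _ _)
    intro ψ hψ
    obtain ⟨hψ0, hψ1⟩ := hψ
    have hu0 : 0 ≤ π / 2 - ψ := by linarith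
    have hu1 : π / 2 - ψ ≤ π / 2 := by linarith
    apply mul_le_mul_of_nonneg_left ?_ hu0
    have hsin : Real.sin ψ = Real.cos (π / 2 - ψ) := (Real.cos_pi_div_two_sub ψ).symm
    have hsin0 : 0 ≤ Real.sin ψ := Real.sin_nonneg_of_nonneg_of_le_pi hψ0 (by linarith)
    have hb := cos_quad_bound hu0 hu1
    rw [← hsin] at hb
    calc Real.sin ψ ^ (2 * n + 2)
        ≤ Real.exp (-(2 / π ^ 2 * (π / 2 - ψ) ^ 2)) ^ (2 * n + 2) :=
          pow_le_pow_left₀ hsin0 hb _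
      _ = Real.exp (-(a * (π / 2 - ψ) ^ 2)) := by
          rw [← Real.exp_nat_mul]
          congr 1
          push_cast
          ring
  have step3 := gauss_integral_le a ha0
  have hval : 1 / (2 * a) = π ^ 2 / (8 * ((n:ℝ) + 1)) := by
    rw [ha]
    field_simp
    ring
  rw [hval] at step3
  linarith

lemma main_nonneg (x : ℝ) (hx : |x| ≤ 1) (hx0 : 0 ≤ x) :
    (Real.arcsin x) ^ 2 =
      ∑' k : ℕ, x ^ (2 * k + 2) * 4 ^ k * (k ! : ℝ) ^ 2 / ((k + 1) * (2 * k + 1)!) := by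
  obtain ⟨hx1, hx2⟩ := abs_le.mp hx
  set θ := Real.arcsin x with hθdef
  have hsin : Real.sin θ = x := Real.sin_arcsin hx1 hx2
  have hθ0 : 0 ≤ θ := Real.arcsin_nonneg.mpr hx0
  have hθ1 : θ ≤ π / 2 := Real.arcsin_le_pi_div_two x
  set f : ℕ → ℝ := fun k => x ^ (2 * k + 2) * 4 ^ k * (k ! : ℝ) ^ 2 / ((k + 1) * (2 * k + 1)!)
    with hf
  have hfk : ∀ k, f k = Bc k / (k + 1) * x ^ (2 * k + 2) := by
    intro k
    rw [hf]
    unfold Bc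
    have h1 : ((2 * k + 1)! : ℝ) ≠ 0 := by positivity
    have h2 : ((k:ℝ) + 1) ≠ 0 := by positivity
    field_simp
  have hnn : ∀ k, 0 ≤ f k := by
    intro k
    rw [hfk k]
    have he : 0 ≤ x ^ (2 * k + 2) := Even.pow_nonneg ⟨k + 1, by ring⟩ x
    have hBp := Bc_pos k
    have hb : 0 ≤ Bc k / ((k:ℝ) + 1) := by positivity
    exact mul_nonneg hb he
  have hpart : ∀ n : ℕ, ∑ k ∈ Finset.range (n + 1), f k
      = θ ^ 2 - (4 * n + 4) * Bc n * ∫ ψ in (0:ℝ)..θ, SF n ψ := by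
    intro n
    have h := theta_sq_eq n θ
    rw [hsin] at h
    rw [Finset.sum_congr rfl (fun k _ => hfk k)]
    linarith [h]
  have hR0 : ∀ n : ℕ, 0 ≤ (4 * (n:ℝ) + 4) * Bc n * ∫ ψ in (0:ℝ)..θ, SF n ψ := by
    intro n
    have hBp := Bc_pos n
    apply mul_nonneg (by positivity)
    apply intervalIntegral.integral_nonneg hθ0
    intro ψ hψ
    exact SF_nonneg n hψ.1
  have hRle : ∀ n : ℕ, (4 * (n:ℝ) + 4) * Bc n * (∫ ψ in (0:ℝ)..θ, SF n ψ)
      ≤ π ^ 2 / 2 * Bc n := by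
    intro n
    have h := rem_bound n hθ0 hθ1
    have hBp := Bc_pos n
    have hc : 0 ≤ (4 * (n:ℝ) + 4) * Bc n := by positivity
    calc (4 * (n:ℝ) + 4) * Bc n * (∫ ψ in (0:ℝ)..θ, SF n ψ)
        ≤ (4 * (n:ℝ) + 4) * Bc n * (π ^ 2 / (8 * (n + 1))) :=
          mul_le_mul_of_nonneg_left h hc
      _ = π ^ 2 / 2 * Bc n := by
          have : ((n:ℝ) + 1) ≠ 0 := by positivity
          field_simp
          ring
  have hRtend : Tendsto (fun n : ℕ => (4 * (n:ℝ) + 4) * Bc n * ∫ ψ in (0:ℝ)..θ, SF n ψ)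
      atTop (nhds 0) := by
    apply squeeze_zero hR0 hRle
    have := Bc_tendsto.const_mul (π ^ 2 / 2)
    simpa using this
  have htend : Tendsto (fun n : ℕ => ∑ k ∈ Finset.range (n + 1), f k) atTop (nhds (θ ^ 2)) := by
    have h := (tendsto_const_nhds (x := θ ^ 2) (f := atTop (α := ℕ))).sub hRtend
    rw [sub_zero] at h
    exact h.congr fun n => (hpart n).symm
  have htend2 : Tendsto (fun n : ℕ => ∑ k ∈ Finset.range n, f k) atTop (nhds (θ ^ 2)) :=
    (Filter.tendsto_add_atTop_iff_nat 1).mp htend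
  have hsum : HasSum f (θ ^ 2) := (hasSum_iff_tendsto_nat_of_nonneg hnn _).mpr htend2
  exact hsum.tsum_eq.symm

theorem stmt_5 (x : ℝ) (hx : |x| ≤ 1) :
    (Real.arcsin x) ^ 2 =
      ∑' k : ℕ, x ^ (2 * k + 2) * 4 ^ k * (k ! : ℝ) ^ 2 / ((k + 1) * (2 * k + 1)!) := by
  rcases le_or_gt 0 x with hx0 | hx0
  · exact main_nonneg x hx hx0
  · have h := main_nonneg (-x) (by rwa [abs_neg]) (by linarith)
    rw [Real.arcsin_neg, neg_sq] at h
    rw [h]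
    congr 1
    funext k
    have he : (-x) ^ (2 * k + 2) = x ^ (2 * k + 2) := Even.neg_pow ⟨k + 1, by ring⟩ x
    rw [he]
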